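/- Let u and v be two subsets of {1,...,N} with the same cardinality. Then ∑_{σ∈S_N : σ(u)=v} ε(σ) ∏_{j=1}^N p_{jσ(j)} = det(P_{uv})², where the sum runs over all permutations σ mapping u onto v, and P_{uv} is the square submatrix of P with rows indexed by u and columns indexed by v (in any fixed orders; the squared determinant does not depend on the orders). Under the joint spectral measure, when the eigenvalues are distinct, this sum equals the probability ℙ({X_i : i∈u} = {λ_j : j∈v}). -/

import Mathlib

open Matrix BigOperators

namespace ProbSetAux

variable {N : ℕ} (u v : Finset (Fin N)) (e : {i // i ∈ u} ≃ {j // j ∈ v})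
  (f : {i // i ∉ u} ≃ {j // j ∉ v})

def ρ : {i // i ∈ u} ⊕ {i // i ∉ u} ≃ Fin N := Equiv.sumCompl (· ∈ u)

def ζ : {i // i ∈ u} ⊕ {i // i ∉ u} ≃ Fin N := (e.sumCongr f).trans (Equiv.sumCompl (· ∈ v))

def g : Equiv.Perm (Fin N) := (ρ u).symm.trans (ζ u v e f)

lemma g_inl (a : {i // i ∈ u}) : g u v e f ↑a = ↑(e a) := by
  simp only [g, ζ, ρ, Equiv.trans_apply]
  rw [Equiv.sumCompl_symm_apply_of_pos a.2]
  simp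

lemma g_inr (a : {i // i ∉ u}) : g u v e f ↑a = ↑(f a) := by
  simp only [g, ζ, ρ, Equiv.trans_apply]
  rw [Equiv.sumCompl_symm_apply_of_neg a.2]
  simp

lemma g_mem_iff (x : Fin N) : x ∈ u ↔ g u v e f x ∈ v := by
  constructor
  · intro hx
    rw [show x = ↑(⟨x, hx⟩ : {i // i ∈ u}) from rfl, g_inl]
    exact (e ⟨x, hx⟩).2
  · intro hx
    by_contra hxu
    rw [show x = ↑(⟨x, hxu⟩ : {i // i ∉ u}) from rfl, g_inr] at hx
    exact (f ⟨x, hxu⟩).2 hx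

def Φ (π : Equiv.Perm {i // i ∈ u}) (τ : Equiv.Perm {i // i ∉ u}) : Equiv.Perm (Fin N) :=
  ((ρ u).symm.trans ((π.sumCongr τ).trans (ρ u))).trans (g u v e f)

lemma Φ_inl (π : Equiv.Perm {i // i ∈ u}) (τ : Equiv.Perm {i // i ∉ u}) (a : {i // i ∈ u}) :
    Φ u v e f π τ ↑a = ↑(e (π a)) := by
  simp only [Φ, Equiv.trans_apply, ρ]
  rw [Equiv.sumCompl_symm_apply_of_pos a.2]
  simp [g_inl]

lemma Φ_inr (π : Equiv.Perm {i // i ∈ u}) (τ : Equiv.Perm {i // i ∉ u}) (a : {i // i ∉ u}) :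
    Φ u v e f π τ ↑a = ↑(f (τ a)) := by
  simp only [Φ, Equiv.trans_apply, ρ]
  rw [Equiv.sumCompl_symm_apply_of_neg a.2]
  simp [g_inr]

lemma Φ_mem_iff (π τ) (x : Fin N) : x ∈ u ↔ Φ u v e f π τ x ∈ v := by
  constructor
  · intro hx
    rw [show x = ↑(⟨x, hx⟩ : {i // i ∈ u}) from rfl, Φ_inl]
    exact (e _).2
  · intro hx
    by_contra hxu
    rw [show x = ↑(⟨x, hxu⟩ : {i // i ∉ u}) from rfl, Φ_inr] at hx
    exact (f _).2 hx

lemma sign_Φ (π τ) :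
    Equiv.Perm.sign (Φ u v e f π τ)
      = Equiv.Perm.sign (g u v e f) * (Equiv.Perm.sign π * Equiv.Perm.sign τ) := by
  have : Φ u v e f π τ = (g u v e f) * ((ρ u).permCongr (π.sumCongr τ)) := by
    ext x
    simp [Φ, Equiv.permCongr, Equiv.equivCongr, Equiv.Perm.mul_def]
  rw [this, _root_.map_mul, Equiv.Perm.sign_permCongr, Equiv.Perm.sign_sumCongr]

lemma image_eq_of_mem_iff {σ : Equiv.Perm (Fin N)} (hcard : u.card = v.card)
    (h : ∀ x, x ∈ u ↔ σ x ∈ v) : u.image σ = v := by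
  apply Finset.eq_of_subset_of_card_le
  · intro y hy
    obtain ⟨x, hx, rfl⟩ := Finset.mem_image.mp hy
    exact (h x).mp hx
  · rw [Finset.card_image_of_injective _ σ.injective, hcard]

lemma mem_iff_of_image {σ : Equiv.Perm (Fin N)} (h : u.image σ = v) (x : Fin N) :
    x ∈ u ↔ σ x ∈ v := by
  constructor
  · intro hx; exact h ▸ Finset.mem_image_of_mem σ hx
  · intro hx
    rw [← h] at hx
    obtain ⟨x', hx', hx'e⟩ := Finset.mem_image.mp hx
    rwa [← σ.injective hx'e]

def ΨL (σ : Equiv.Perm (Fin N)) (h : ∀ x, x ∈ u ↔ σ x ∈ v) : Equiv.Perm {i // i ∈ u} :=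
  Equiv.Perm.subtypePerm ((g u v e f)⁻¹ * σ)
    (fun x => by
      rw [h x]
      show (g u v e f)⁻¹ (σ x) ∈ u ↔ σ x ∈ v
      rw [g_mem_iff u v e f ((g u v e f)⁻¹ (σ x)), Equiv.Perm.coe_inv, Equiv.apply_symm_apply])

def ΨR (σ : Equiv.Perm (Fin N)) (h : ∀ x, x ∈ u ↔ σ x ∈ v) : Equiv.Perm {i // i ∉ u} :=
  Equiv.Perm.subtypePerm ((g u v e f)⁻¹ * σ)
    (fun x => by
      rw [not_iff_not, h x]
      show (g u v e f)⁻¹ (σ x) ∈ u ↔ σ x ∈ v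
      rw [g_mem_iff u v e f ((g u v e f)⁻¹ (σ x)), Equiv.Perm.coe_inv, Equiv.apply_symm_apply])

lemma Φ_ΨLR (σ : Equiv.Perm (Fin N)) (h : ∀ x, x ∈ u ↔ σ x ∈ v) :
    Φ u v e f (ΨL u v e f σ h) (ΨR u v e f σ h) = σ := by
  ext x
  by_cases hx : x ∈ u
  · rw [show x = ↑(⟨x, hx⟩ : {i // i ∈ u}) from rfl, Φ_inl, ← g_inl u v e f]
    simp [ΨL, Equiv.Perm.subtypePerm_apply]
  · rw [show x = ↑(⟨x, hx⟩ : {i // i ∉ u}) from rfl, Φ_inr, ← g_inr u v e f]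
    simp [ΨR, Equiv.Perm.subtypePerm_apply]

lemma ΨL_Φ (π τ) (h : ∀ x, x ∈ u ↔ Φ u v e f π τ x ∈ v) :
    ΨL u v e f (Φ u v e f π τ) h = π := by
  ext a
  simp only [ΨL, Equiv.Perm.subtypePerm_apply, Equiv.Perm.mul_apply]
  rw [Φ_inl, ← g_inl u v e f (π a), Equiv.Perm.coe_inv, Equiv.symm_apply_apply]

lemma ΨR_Φ (π τ) (h : ∀ x, x ∈ u ↔ Φ u v e f π τ x ∈ v) :
    ΨR u v e f (Φ u v e f π τ) h = τ := by
  ext a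
  simp only [ΨR, Equiv.Perm.subtypePerm_apply, Equiv.Perm.mul_apply]
  rw [Φ_inr, ← g_inr u v e f (τ a), Equiv.Perm.coe_inv, Equiv.symm_apply_apply]

lemma prod_Φ (P : Matrix (Fin N) (Fin N) ℝ) (π τ) :
    ∏ j : Fin N, P j (Φ u v e f π τ j)
      = (∏ a : {i // i ∈ u}, P ↑a ↑(e (π a))) * ∏ a : {i // i ∉ u}, P ↑a ↑(f (τ a)) := by
  rw [← Equiv.prod_comp (ρ u) (fun j => P j (Φ u v e f π τ j)), Fintype.prod_sum_type]
  congr 1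
  · apply Finset.prod_congr rfl
    intro a _
    simp [ρ, Φ_inl]
  · apply Finset.prod_congr rfl
    intro a _
    simp [ρ, Φ_inr]

variable (P : Matrix (Fin N) (Fin N) ℝ)

def Q : Matrix ({i // i ∈ u} ⊕ {i // i ∉ u}) ({i // i ∈ u} ⊕ {i // i ∉ u}) ℝ :=
  P.submatrix (ρ u) (ζ u v e f)

lemma Q_eq : Q u v e f P = fromBlocks
    (Matrix.of fun (a : {i // i ∈ u}) (b : {i // i ∈ u}) => P ↑a ↑(e b))
    (Matrix.of fun (a : {i // i ∈ u}) (b : {i // i ∉ u}) => P ↑a ↑(f b))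
    (Matrix.of fun (a : {i // i ∉ u}) (b : {i // i ∈ u}) => P ↑a ↑(e b))
    (Matrix.of fun (a : {i // i ∉ u}) (b : {i // i ∉ u}) => P ↑a ↑(f b)) := by
  ext x y
  cases x <;> cases y <;> simp [Q, ρ, ζ, fromBlocks]

lemma Q_orth (horth : P * Pᵀ = 1) : Q u v e f P * (Q u v e f P)ᵀ = 1 := by
  rw [Q, transpose_submatrix, submatrix_mul_equiv, horth, submatrix_one_equiv]

lemma det_Q (hdet : P.det = 1) :
    (Q u v e f P).det = ((Equiv.Perm.sign (g u v e f) : ℤ) : ℝ) := by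
  have hσ : Equiv.Perm.sign ((ζ u v e f).trans (ρ u).symm)
      = Equiv.Perm.sign (g u v e f) := by
    have h0 : (ζ u v e f).trans (ρ u).symm = (ρ u).symm.permCongr (g u v e f) := by
      ext x; simp [g, Equiv.permCongr, Equiv.equivCongr]
    rw [h0, Equiv.Perm.sign_permCongr]
  have hQ : Q u v e f P
      = (P.submatrix (ρ u) (ρ u)).submatrix id ⇑((ζ u v e f).trans (ρ u).symm) := by
    ext x y; simp [Q, Matrix.submatrix_apply]
  rw [hQ, det_permute', det_submatrix_equiv_self, hdet, mul_one, hσ]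

end ProbSetAux
namespace ProbSetAux2

lemma det_block {m n : Type*} [Fintype m] [DecidableEq m] [Fintype n] [DecidableEq n]
    (A : Matrix m m ℝ) (C : Matrix m n ℝ) (D : Matrix n m ℝ) (B : Matrix n n ℝ)
    (h : fromBlocks A C D B * (fromBlocks A C D B)ᵀ = 1) :
    (fromBlocks A C D B).det * A.det = B.det := by
  rw [fromBlocks_transpose, fromBlocks_multiply, ← fromBlocks_one] at h
  obtain ⟨h11, h12, h21, h22⟩ := fromBlocks_inj.mp h
  have key : fromBlocks A C D B * fromBlocks Aᵀ 0 Cᵀ 1 = fromBlocks 1 C 0 B := by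
    rw [fromBlocks_multiply, h11, h21]
    simp
  have hd := congrArg Matrix.det key
  rw [det_mul, det_fromBlocks_zero₁₂, det_fromBlocks_zero₂₁, det_transpose] at hd
  simpa using hd

end ProbSetAux2


open ProbSetAux ProbSetAux2 in
/-- Under the joint spectral measure, the probability that `{X_i : i ∈ u}` equals
`{λ_j : j ∈ v}` is `det(P_{uv})²`:
`∑_{σ : σ(u)=v} ε(σ) ∏_j p_{jσ(j)} = det(P_{uv})²`, for any fixed enumeration
(given by a bijection `e`) of the rows `u` and columns `v`. -/
theorem prob_set_image_eq_det_sq (N : ℕ)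
    (P : Matrix (Fin N) (Fin N) ℝ)
    (horth : P * Pᵀ = 1)
    (hdet : P.det = 1)
    (u v : Finset (Fin N)) (hcard : u.card = v.card)
    (e : {i // i ∈ u} ≃ {j // j ∈ v}) :
    ∑ σ ∈ Finset.univ.filter (fun σ : Equiv.Perm (Fin N) => u.image σ = v),
        ((Equiv.Perm.sign σ : ℤ) : ℝ) * ∏ j : Fin N, P j (σ j)
      = (Matrix.det (Matrix.of fun i j : {i // i ∈ u} => P (i : Fin N) ((e j : Fin N)))) ^ 2 := by
  classical
  have hcardc : Fintype.card {i // i ∉ u} = Fintype.card {j // j ∉ v} := by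
    simp [Fintype.card_subtype_compl, hcard]
  let f : {i // i ∉ u} ≃ {j // j ∉ v} := Fintype.equivOfCardEq hcardc
  have h1 : ∑ σ ∈ Finset.univ.filter (fun σ : Equiv.Perm (Fin N) => u.image σ = v),
        ((Equiv.Perm.sign σ : ℤ) : ℝ) * ∏ j : Fin N, P j (σ j)
      = ∑ p : Equiv.Perm {i // i ∈ u} × Equiv.Perm {i // i ∉ u},
          ((Equiv.Perm.sign (Φ u v e f p.1 p.2) : ℤ) : ℝ)
            * ∏ j : Fin N, P j (Φ u v e f p.1 p.2 j) := by
    refine Finset.sum_bij'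
      (fun σ hσ => (ΨL u v e f σ (mem_iff_of_image u v (Finset.mem_filter.mp hσ).2),
        ΨR u v e f σ (mem_iff_of_image u v (Finset.mem_filter.mp hσ).2)))
      (fun p _ => Φ u v e f p.1 p.2) ?_ ?_ ?_ ?_ ?_
    · intro a _; exact Finset.mem_univ _
    · intro p _
      exact Finset.mem_filter.mpr ⟨Finset.mem_univ _,
        image_eq_of_mem_iff u v hcard (Φ_mem_iff u v e f p.1 p.2)⟩
    · intro σ hσ; exact Φ_ΨLR u v e f σ (mem_iff_of_image u v (Finset.mem_filter.mp hσ).2)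
    · intro p _
      exact Prod.ext (ΨL_Φ u v e f p.1 p.2 (Φ_mem_iff u v e f p.1 p.2))
        (ΨR_Φ u v e f p.1 p.2 (Φ_mem_iff u v e f p.1 p.2))
    · intro σ hσ; rw [Φ_ΨLR]
  rw [h1]
  set sg : ℝ := ((Equiv.Perm.sign (g u v e f) : ℤ) : ℝ) with hsgdef
  have h3 : ∑ p : Equiv.Perm {i // i ∈ u} × Equiv.Perm {i // i ∉ u},
          ((Equiv.Perm.sign (Φ u v e f p.1 p.2) : ℤ) : ℝ)
            * ∏ j : Fin N, P j (Φ u v e f p.1 p.2 j)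
      = sg * ((∑ π : Equiv.Perm {i // i ∈ u}, ((Equiv.Perm.sign π : ℤ) : ℝ)
              * ∏ a : {i // i ∈ u}, P ↑a ↑(e (π a)))
            * (∑ τ : Equiv.Perm {i // i ∉ u}, ((Equiv.Perm.sign τ : ℤ) : ℝ)
              * ∏ a : {i // i ∉ u}, P ↑a ↑(f (τ a)))) := by
    rw [Fintype.sum_mul_sum, Finset.mul_sum, Fintype.sum_prod_type]
    refine Finset.sum_congr rfl fun π _ => ?_
    rw [Finset.mul_sum]
    refine Finset.sum_congr rfl fun τ _ => ?_
    rw [sign_Φ, prod_Φ]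
    push_cast
    ring
  rw [h3]
  have hA : (∑ π : Equiv.Perm {i // i ∈ u}, ((Equiv.Perm.sign π : ℤ) : ℝ)
        * ∏ a : {i // i ∈ u}, P ↑a ↑(e (π a)))
      = (Matrix.of fun i j : {i // i ∈ u} => P (i : Fin N) ((e j : Fin N))).det := by
    rw [← Matrix.det_transpose, Matrix.det_apply']
    rfl
  have hB : (∑ τ : Equiv.Perm {i // i ∉ u}, ((Equiv.Perm.sign τ : ℤ) : ℝ)
        * ∏ a : {i // i ∉ u}, P ↑a ↑(f (τ a)))
      = (Matrix.of fun (a : {i // i ∉ u}) (b : {i // i ∉ u}) => P ↑a ↑(f b)).det := by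
    rw [← Matrix.det_transpose, Matrix.det_apply']
    rfl
  rw [hA, hB]
  have horthQ := Q_orth u v e f P horth
  rw [Q_eq] at horthQ
  have hblock := det_block _ _ _ _ horthQ
  have hdq : (fromBlocks
      (Matrix.of fun (a : {i // i ∈ u}) (b : {i // i ∈ u}) => P ↑a ↑(e b))
      (Matrix.of fun (a : {i // i ∈ u}) (b : {i // i ∉ u}) => P ↑a ↑(f b))
      (Matrix.of fun (a : {i // i ∉ u}) (b : {i // i ∈ u}) => P ↑a ↑(e b))
      (Matrix.of fun (a : {i // i ∉ u}) (b : {i // i ∉ u}) => P ↑a ↑(f b))).det = sg := by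
    rw [← Q_eq, det_Q u v e f P hdet]
  rw [hdq] at hblock
  rw [← hblock]
  have hsg : sg * sg = 1 := by
    rcases Int.units_eq_one_or (Equiv.Perm.sign (g u v e f)) with h | h <;>
      simp [hsgdef, h]
  rw [show sg * ((Matrix.of fun i j : {i // i ∈ u} => P (i : Fin N) ((e j : Fin N))).det
      * (sg * (Matrix.of fun i j : {i // i ∈ u} => P (i : Fin N) ((e j : Fin N))).det))
    = (sg * sg) * (Matrix.of fun i j : {i // i ∈ u} => P (i : Fin N) ((e j : Fin N))).det ^ 2
    from by ring, hsg, one_mul]
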